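/- For a in (0,π/4), let β = √(1-tan²a). Then (2/π)·(2-β²)^{3/2}/β² · (K(β) - 2E(β)/(2-β²)) - √((1-β²)(2-β²))/β² · (K(β) - 2E(β)/(2-β²)) > 0; equivalently, (√(2-β²)/β²)·(K(β) - 2E(β)/(2-β²))·((2/π)(2-β²) - √(1-β²)) > 0. -/

import Mathlib

open Real Set

noncomputable def ellK (k : ℝ) : ℝ :=
  ∫ θ in (0:ℝ)..(Real.pi/2), 1 / Real.sqrt (1 - k^2 * Real.sin θ ^ 2)

noncomputable def ellE (k : ℝ) : ℝ :=
  ∫ θ in (0:ℝ)..(Real.pi/2), Real.sqrt (1 - k^2 * Real.sin θ ^ 2)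

lemma key_ineq {k : ℝ} (hk0 : 0 < k) (hk1 : k < 1) :
    0 < (2 - k^2) * ellK k - 2 * ellE k := by
  have hden : ∀ θ : ℝ, 0 < 1 - k^2 * Real.sin θ ^ 2 := by
    intro θ
    nlinarith [Real.sin_sq_le_one θ, sq_nonneg k,
      mul_le_mul_of_nonneg_left (Real.sin_sq_le_one θ) (sq_nonneg k)]
  have hs : Continuous fun θ : ℝ => Real.sqrt (1 - k^2 * Real.sin θ ^ 2) :=
    (continuous_const.sub (continuous_const.mul (Real.continuous_sin.pow 2))).sqrt
  have hsne : ∀ θ : ℝ, Real.sqrt (1 - k^2 * Real.sin θ ^ 2) ≠ 0 :=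
    fun θ => (Real.sqrt_pos.mpr (hden θ)).ne'
  set F : ℝ → ℝ := fun θ =>
    (2 - k^2) / Real.sqrt (1 - k^2 * Real.sin θ ^ 2)
      - 2 * Real.sqrt (1 - k^2 * Real.sin θ ^ 2) with hFdef
  have hFc : Continuous F := (continuous_const.div hs hsne).sub (continuous_const.mul hs)
  have hinv : Continuous fun θ : ℝ => 1 / Real.sqrt (1 - k^2 * Real.sin θ ^ 2) :=
    continuous_const.div hs hsne
  have hrepr : (2 - k^2) * ellK k - 2 * ellE k = ∫ θ in (0:ℝ)..(Real.pi/2), F θ := by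
    unfold ellK ellE
    rw [← intervalIntegral.integral_const_mul, ← intervalIntegral.integral_const_mul,
      ← intervalIntegral.integral_sub
        (f := fun θ : ℝ => (2 - k^2) * (1 / Real.sqrt (1 - k^2 * Real.sin θ ^ 2)))
        (g := fun θ : ℝ => 2 * Real.sqrt (1 - k^2 * Real.sin θ ^ 2))
        ((continuous_const.mul hinv).intervalIntegrable _ _)
        ((continuous_const.mul hs).intervalIntegrable _ _)]
    congr 1
    ext θ
    simp only [hFdef, mul_one_div]
  have hsplit : (∫ θ in (0:ℝ)..(Real.pi/2), F θ)
      = (∫ θ in (0:ℝ)..(Real.pi/4), F θ) + ∫ θ in (Real.pi/4)..(Real.pi/2), F θ :=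
    (intervalIntegral.integral_add_adjacent_intervals
      (hFc.intervalIntegrable _ _) (hFc.intervalIntegrable _ _)).symm
  have hsub : (∫ θ in (0:ℝ)..(Real.pi/4), F θ)
      = ∫ θ in (Real.pi/4)..(Real.pi/2), F (Real.pi/2 - θ) := by
    rw [intervalIntegral.integral_comp_sub_left F (Real.pi/2)]
    congr 1 <;> ring
  have hcomp : Continuous fun θ : ℝ => F (Real.pi/2 - θ) :=
    hFc.comp (continuous_const.sub continuous_id)
  have hmerge : (∫ θ in (Real.pi/4)..(Real.pi/2), F (Real.pi/2 - θ))
      + (∫ θ in (Real.pi/4)..(Real.pi/2), F θ)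
      = ∫ θ in (Real.pi/4)..(Real.pi/2), (F (Real.pi/2 - θ) + F θ) :=
    (intervalIntegral.integral_add (hcomp.intervalIntegrable _ _)
      (hFc.intervalIntegrable _ _)).symm
  rw [hrepr, hsplit, hsub, hmerge]
  apply intervalIntegral.intervalIntegral_pos_of_pos_on
    ((hcomp.add hFc).intervalIntegrable _ _)
  · intro x hx
    obtain ⟨hx1, hx2⟩ := hx
    have hpi := Real.pi_pos
    -- basic trig facts
    have hsin : 1/2 < Real.sin x ^ 2 := by
      have h1 : Real.sin (Real.pi/4) < Real.sin x :=
        Real.sin_lt_sin_of_lt_of_le_pi_div_two (by linarith) (by linarith) hx1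
      rw [Real.sin_pi_div_four] at h1
      have h2 : (0:ℝ) < Real.sqrt 2 / 2 := by positivity
      nlinarith [Real.sq_sqrt (by norm_num : (0:ℝ) ≤ 2)]
    have hcospos : 0 < Real.cos x := Real.cos_pos_of_mem_Ioo ⟨by linarith, hx2⟩
    have hcos : Real.cos x ^ 2 < 1/2 := by
      have h1 : Real.cos x < Real.cos (Real.pi/4) :=
        Real.cos_lt_cos_of_nonneg_of_le_pi (by linarith) (by linarith) hx1
      rw [Real.cos_pi_div_four] at h1
      nlinarith [Real.sq_sqrt (by norm_num : (0:ℝ) ≤ 2)]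
    set A := Real.sqrt (1 - k^2 * Real.sin x ^ 2) with hAdef
    set B := Real.sqrt (1 - k^2 * Real.cos x ^ 2) with hBdef
    have hA2 : A^2 = 1 - k^2 * Real.sin x ^ 2 := Real.sq_sqrt (hden x).le
    have hApos : 0 < A := Real.sqrt_pos.mpr (hden x)
    have hBden : 0 < 1 - k^2 * Real.cos x ^ 2 := by
      nlinarith [Real.cos_sq_le_one x, mul_le_mul_of_nonneg_left (Real.cos_sq_le_one x) (sq_nonneg k)]
    have hBpos : 0 < B := Real.sqrt_pos.mpr hBden
    have hB2 : B^2 = 1 - k^2 * Real.cos x ^ 2 := Real.sq_sqrt hBden.le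
    have hAB : A < B := by
      apply Real.sqrt_lt_sqrt (hden x).le
      have hk2 : 0 < k^2 := by positivity
      nlinarith [mul_lt_mul_of_pos_left (show Real.cos x ^ 2 < Real.sin x ^ 2 by linarith) hk2]
    have hFx : F x = k^2 * (2 * Real.sin x ^ 2 - 1) / A := by
      simp only [hFdef, ← hAdef]
      field_simp
      linear_combination (-2:ℝ) * hA2
    have hFx' : F (Real.pi/2 - x) = -(k^2 * (2 * Real.sin x ^ 2 - 1)) / B := by
      simp only [hFdef, Real.sin_pi_div_two_sub, ← hBdef]
      field_simp
      linear_combination (-2:ℝ) * hB2 + 2 * k^2 * Real.sin_sq_add_cos_sq x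
    show 0 < F (Real.pi/2 - x) + F x
    rw [hFx, hFx']
    have hnum : 0 < k^2 * (2 * Real.sin x ^ 2 - 1) := by
      apply mul_pos (by positivity)
      linarith
    rw [neg_div, neg_add_eq_sub, sub_pos]
    exact div_lt_div_of_pos_left hnum hApos hAB
  · linarith [Real.pi_pos]

theorem stmt10 : ∀ a ∈ Ioo (0:ℝ) (Real.pi/4),
    ∀ β : ℝ, β = Real.sqrt (1 - Real.tan a ^ 2) →
    (2 / Real.pi) * (2 - β^2)^((3:ℝ)/2) / β^2 * (ellK β - 2 * ellE β / (2 - β^2)) -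
      Real.sqrt ((1 - β^2) * (2 - β^2)) / β^2 * (ellK β - 2 * ellE β / (2 - β^2)) > 0 ∧
    (Real.sqrt (2 - β^2) / β^2) * (ellK β - 2 * ellE β / (2 - β^2)) *
      ((2 / Real.pi) * (2 - β^2) - Real.sqrt (1 - β^2)) > 0 := by
  intro a ha β hβ
  obtain ⟨ha0, ha4⟩ := ha
  have hpi := Real.pi_pos
  have ht0 : 0 < Real.tan a := Real.tan_pos_of_pos_of_lt_pi_div_two ha0 (by linarith)
  have ht1 : Real.tan a < 1 := by
    have h := Real.tan_lt_tan_of_lt_of_lt_pi_div_two (x := a) (y := Real.pi/4)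
      (by linarith) (by linarith) ha4
    rwa [Real.tan_pi_div_four] at h
  set t := Real.tan a with htdef
  have hβ2 : β^2 = 1 - t^2 := by
    rw [hβ, Real.sq_sqrt (by nlinarith)]
  have hβ0 : 0 < β := by
    rw [hβ]; exact Real.sqrt_pos.mpr (by nlinarith)
  have hβ1 : β < 1 := by nlinarith
  have hK := key_ineq hβ0 hβ1
  have h2β : 0 < 2 - β^2 := by nlinarith
  have hX : 0 < ellK β - 2 * ellE β / (2 - β^2) := by
    rw [sub_pos, div_lt_iff₀ h2β]
    nlinarith
  have h1mβ : Real.sqrt (1 - β^2) = t := by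
    rw [show 1 - β^2 = t^2 by linarith, Real.sqrt_sq ht0.le]
  have hfac : 0 < (2/Real.pi) * (2 - β^2) - Real.sqrt (1 - β^2) := by
    rw [h1mβ, sub_pos, show 2 - β^2 = 1 + t^2 by linarith, div_mul_eq_mul_div, lt_div_iff₀ hpi]
    nlinarith [Real.pi_lt_d2, sq_nonneg (1 - t)]
  have hsq : 0 < Real.sqrt (2 - β^2) := Real.sqrt_pos.mpr h2β
  have second : 0 < (Real.sqrt (2 - β^2) / β^2) * (ellK β - 2 * ellE β / (2 - β^2)) *
      ((2 / Real.pi) * (2 - β^2) - Real.sqrt (1 - β^2)) :=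
    mul_pos (mul_pos (div_pos hsq (by positivity)) hX) hfac
  refine ⟨?_, second⟩
  have hr : (2 - β^2)^((3:ℝ)/2) = (2 - β^2) * Real.sqrt (2 - β^2) := by
    rw [show (3:ℝ)/2 = 1 + 1/2 by norm_num, Real.rpow_add h2β, Real.rpow_one,
      Real.sqrt_eq_rpow]
  have hm : Real.sqrt ((1 - β^2) * (2 - β^2))
      = Real.sqrt (1 - β^2) * Real.sqrt (2 - β^2) := Real.sqrt_mul (by nlinarith) _
  rw [gt_iff_lt, hr, hm]
  have heq : (2 / Real.pi) * ((2 - β^2) * Real.sqrt (2 - β^2)) / β^2 *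
        (ellK β - 2 * ellE β / (2 - β^2)) -
      Real.sqrt (1 - β^2) * Real.sqrt (2 - β^2) / β^2 *
        (ellK β - 2 * ellE β / (2 - β^2))
      = (Real.sqrt (2 - β^2) / β^2) * (ellK β - 2 * ellE β / (2 - β^2)) *
        ((2 / Real.pi) * (2 - β^2) - Real.sqrt (1 - β^2)) := by ring
  rw [heq]
  exact second
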